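/- For fixed x > |y| ≥ 0, the function ε ↦ (ε²/2)(sinh τ_ε + τ_ε), where τ_ε = arcosh((x² − y²)/(2ε²) + 1), is strictly increasing on (0, ∞). -/

import Mathlib

open Real

/-- Inverse hyperbolic cosine on `[1, ∞)`. -/
noncomputable def arcosh (x : ℝ) : ℝ := Real.log (x + Real.sqrt (x ^ 2 - 1))

lemma aux_sq (u : ℝ) (hu : 1 < u) : Real.sqrt (u ^ 2 - 1) ^ 2 = u ^ 2 - 1 :=
  Real.sq_sqrt (by nlinarith)

lemma aux_pos (u : ℝ) (hu : 1 < u) : 0 < Real.sqrt (u ^ 2 - 1) :=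
  Real.sqrt_pos.2 (by nlinarith)

lemma aux_inv (u : ℝ) (hu : 1 < u) : (u + Real.sqrt (u ^ 2 - 1))⁻¹ = u - Real.sqrt (u ^ 2 - 1) := by
  have h := aux_sq u hu
  have hpos : 0 < u + Real.sqrt (u ^ 2 - 1) := by nlinarith [aux_pos u hu]
  field_simp
  nlinarith

lemma arcosh_pos (u : ℝ) (hu : 1 < u) : 0 < _root_.arcosh u := by
  unfold _root_.arcosh
  apply Real.log_pos
  nlinarith [aux_pos u hu]

lemma sinh_arcosh (u : ℝ) (hu : 1 < u) : Real.sinh (_root_.arcosh u) = Real.sqrt (u ^ 2 - 1) := by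
  unfold _root_.arcosh
  rw [Real.sinh_log (by nlinarith [aux_pos u hu]), aux_inv u hu]
  ring

lemma cosh_arcosh (u : ℝ) (hu : 1 < u) : Real.cosh (_root_.arcosh u) = u := by
  unfold _root_.arcosh
  rw [Real.cosh_log (by nlinarith [aux_pos u hu]), aux_inv u hu]
  ring

lemma hasDerivAt_arcosh (u : ℝ) (hu : 1 < u) :
    HasDerivAt _root_.arcosh (1 / Real.sqrt (u ^ 2 - 1)) u := by
  have hs := aux_pos u hu
  have hsq := aux_sq u hu
  have h1 : HasDerivAt (fun t : ℝ => t ^ 2 - 1) (2 * u) u := by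
    simpa using ((hasDerivAt_pow 2 u).sub_const 1)
  have h2 : HasDerivAt (fun t : ℝ => Real.sqrt (t ^ 2 - 1))
      (2 * u / (2 * Real.sqrt (u ^ 2 - 1))) u := by
    have := (Real.hasDerivAt_sqrt (x := u ^ 2 - 1) (by nlinarith)).comp u h1
    simpa [Function.comp_def, mul_comm, div_eq_mul_inv, mul_assoc] using this
  have h3 : HasDerivAt (fun t : ℝ => t + Real.sqrt (t ^ 2 - 1))
      (1 + 2 * u / (2 * Real.sqrt (u ^ 2 - 1))) u := (hasDerivAt_id u).add h2
  have h4 : HasDerivAt (fun t : ℝ => Real.log (t + Real.sqrt (t ^ 2 - 1)))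
      ((1 + 2 * u / (2 * Real.sqrt (u ^ 2 - 1))) / (u + Real.sqrt (u ^ 2 - 1))) u :=
    h3.log (by nlinarith)
  have heq : (1 + 2 * u / (2 * Real.sqrt (u ^ 2 - 1))) / (u + Real.sqrt (u ^ 2 - 1))
      = 1 / Real.sqrt (u ^ 2 - 1) := by
    field_simp
    nlinarith
  rw [heq] at h4
  exact h4

lemma deriv_identity (c ε u s A : ℝ) (hε : ε ≠ 0) (hs : s ≠ 0)
    (hsq : s ^ 2 = u ^ 2 - 1) (hcu : c = 2 * ε ^ 2 * (u - 1)) :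
    ε * A = ε * (s + A) + ε ^ 2 / 2 * (u * (1 / s * -(c / ε ^ 3)) + 1 / s * -(c / ε ^ 3)) := by
  rw [hcu]
  field_simp
  linear_combination (-1 : ℝ) * hsq

theorem stmt_6 (x y : ℝ) (hxy : |y| < x) :
    StrictMonoOn
      (fun ε : ℝ => ε ^ 2 / 2 * (sinh (_root_.arcosh ((x ^ 2 - y ^ 2) / (2 * ε ^ 2) + 1))
        + _root_.arcosh ((x ^ 2 - y ^ 2) / (2 * ε ^ 2) + 1)))
      (Set.Ioi 0) := by
  have hc : 0 < x ^ 2 - y ^ 2 := by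
    have h1 : 0 ≤ |y| := abs_nonneg y
    have h2 : y ^ 2 = |y| ^ 2 := (sq_abs y).symm
    nlinarith
  have key : ∀ ε : ℝ, 0 < ε →
      HasDerivAt (fun ε : ℝ => ε ^ 2 / 2 * (sinh (_root_.arcosh ((x ^ 2 - y ^ 2) / (2 * ε ^ 2) + 1))
        + _root_.arcosh ((x ^ 2 - y ^ 2) / (2 * ε ^ 2) + 1)))
        (ε * _root_.arcosh ((x ^ 2 - y ^ 2) / (2 * ε ^ 2) + 1)) ε := by
    intro ε hε
    have hε2 : (0:ℝ) < 2 * ε ^ 2 := mul_pos two_pos (pow_pos hε 2)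
    have hu : 1 < (x ^ 2 - y ^ 2) / (2 * ε ^ 2) + 1 := by
      have : 0 < (x ^ 2 - y ^ 2) / (2 * ε ^ 2) := div_pos hc hε2
      linarith
    have hs : 0 < Real.sqrt (((x ^ 2 - y ^ 2) / (2 * ε ^ 2) + 1) ^ 2 - 1) := aux_pos _ hu
    have hsq : Real.sqrt (((x ^ 2 - y ^ 2) / (2 * ε ^ 2) + 1) ^ 2 - 1) ^ 2
        = ((x ^ 2 - y ^ 2) / (2 * ε ^ 2) + 1) ^ 2 - 1 := aux_sq _ hu
    have hu' : HasDerivAt (fun ε : ℝ => (x ^ 2 - y ^ 2) / (2 * ε ^ 2) + 1)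
        (-((x ^ 2 - y ^ 2) / ε ^ 3)) ε := by
      have hden : HasDerivAt (fun ε : ℝ => 2 * ε ^ 2) (2 * (2 * ε)) ε := by
        simpa [mul_assoc] using ((hasDerivAt_pow 2 ε).const_mul 2)
      have : HasDerivAt (fun ε : ℝ => (x ^ 2 - y ^ 2) / (2 * ε ^ 2) + 1) _ ε :=
        ((hasDerivAt_const ε (x ^ 2 - y ^ 2)).div hden (ne_of_gt hε2)).add_const 1
      convert this using 1
      field_simp
      ring
    have hτ : HasDerivAt (fun ε : ℝ => _root_.arcosh ((x ^ 2 - y ^ 2) / (2 * ε ^ 2) + 1))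
        (1 / Real.sqrt (((x ^ 2 - y ^ 2) / (2 * ε ^ 2) + 1) ^ 2 - 1)
          * -((x ^ 2 - y ^ 2) / ε ^ 3)) ε := by
        have := (hasDerivAt_arcosh _ hu).comp ε hu'; exact this
    have hsinh : HasDerivAt (fun ε : ℝ => sinh (_root_.arcosh ((x ^ 2 - y ^ 2) / (2 * ε ^ 2) + 1)))
        (((x ^ 2 - y ^ 2) / (2 * ε ^ 2) + 1)
          * (1 / Real.sqrt (((x ^ 2 - y ^ 2) / (2 * ε ^ 2) + 1) ^ 2 - 1)
            * -((x ^ 2 - y ^ 2) / ε ^ 3))) ε := by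
      have := (Real.hasDerivAt_sinh (_root_.arcosh ((x ^ 2 - y ^ 2) / (2 * ε ^ 2) + 1))).comp ε hτ
      rwa [cosh_arcosh _ hu] at this
    have hsq2 : HasDerivAt (fun ε : ℝ => ε ^ 2 / 2) ε ε := by
      simpa using (hasDerivAt_pow 2 ε).div_const 2
    have hmul : HasDerivAt (fun ε : ℝ => ε ^ 2 / 2 * (sinh (_root_.arcosh ((x ^ 2 - y ^ 2) / (2 * ε ^ 2) + 1))
        + _root_.arcosh ((x ^ 2 - y ^ 2) / (2 * ε ^ 2) + 1))) _ ε := hsq2.mul (hsinh.add hτ)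
    convert hmul using 1
    rw [sinh_arcosh _ hu]
    exact deriv_identity (x ^ 2 - y ^ 2) ε _ _ _ (ne_of_gt hε) (ne_of_gt hs) hsq
      (by field_simp; ring)
  have hpos : ∀ ε ∈ interior (Set.Ioi (0:ℝ)),
      0 < deriv (fun ε : ℝ => ε ^ 2 / 2 * (sinh (_root_.arcosh ((x ^ 2 - y ^ 2) / (2 * ε ^ 2) + 1))
        + _root_.arcosh ((x ^ 2 - y ^ 2) / (2 * ε ^ 2) + 1))) ε := by
    intro ε hε
    rw [interior_Ioi] at hε
    rw [(key ε hε).deriv]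
    have hu : 1 < (x ^ 2 - y ^ 2) / (2 * ε ^ 2) + 1 := by
      have : 0 < (x ^ 2 - y ^ 2) / (2 * ε ^ 2) :=
        div_pos hc (mul_pos two_pos (pow_pos hε 2))
      linarith
    exact mul_pos hε (arcosh_pos _ hu)
  exact strictMonoOn_of_deriv_pos (convex_Ioi 0)
    (fun ε hε => ((key ε hε).continuousAt).continuousWithinAt) hpos
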